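/- arXiv:1410.3356 — 6 statements merged into one kernel-verified Lean document; each statement's English description precedes it below -/
import Mathlib

section
/- Let ξ ∈ ℝ³ with ξ ≠ 0 and let B₃(ξ) be the linear operator on the subspace V = {(X₁,X₂) ∈ ℂ³ × ℂ³ : X₁·ξ = X₂·ξ = 0} defined by B₃(ξ)(X₁,X₂) = (i ξ × X₂, −i ξ × X₁). Then every eigenvalue λ of B₃(ξ) satisfies λ = i|ξ| or λ = −i|ξ|. -/
open Matrix

/-- Every eigenvalue of the Maxwell operator `B₃(ξ)(X₁,X₂) = (i ξ × X₂, −i ξ × X₁)` on the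
subspace of pairs orthogonal to `ξ` equals `i|ξ|` or `−i|ξ|`. -/
theorem stmt2 (ξ : Fin 3 → ℝ) (hξ : ξ ≠ 0) (lam : ℂ) (X₁ X₂ : Fin 3 → ℂ)
    (h₁ : X₁ ⬝ᵥ (fun i => (ξ i : ℂ)) = 0) (h₂ : X₂ ⬝ᵥ (fun i => (ξ i : ℂ)) = 0)
    (hX : (X₁, X₂) ≠ 0)
    (e₁ : Complex.I • crossProduct (fun i => (ξ i : ℂ)) X₂ = lam • X₁)
    (e₂ : -(Complex.I • crossProduct (fun i => (ξ i : ℂ)) X₁) = lam • X₂) :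
    lam = Complex.I * (Real.sqrt (ξ ⬝ᵥ ξ) : ℂ) ∨
      lam = -(Complex.I * (Real.sqrt (ξ ⬝ᵥ ξ) : ℂ)) := by
  have hI : Complex.I * Complex.I = -1 := Complex.I_mul_I
  set a : ℂ := (ξ 0 : ℂ)
  set b : ℂ := (ξ 1 : ℂ)
  set c : ℂ := (ξ 2 : ℂ)
  -- component equations
  have E10 := congrFun e₁ 0
  have E11 := congrFun e₁ 1
  have E12 := congrFun e₁ 2
  have E20 := congrFun e₂ 0
  have E21 := congrFun e₂ 1
  have E22 := congrFun e₂ 2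
  simp only [cross_apply, Pi.smul_apply, Pi.neg_apply, smul_eq_mul,
    Matrix.cons_val_zero, Matrix.cons_val_one, Matrix.head_cons,
    Matrix.cons_val_two, Matrix.tail_cons] at E10 E11 E12 E20 E21 E22
  rw [dotProduct, Fin.sum_univ_three] at h₁ h₂
  -- key componentwise identities
  have k1 : ∀ i, (lam ^ 2 + (a ^ 2 + b ^ 2 + c ^ 2)) * X₁ i = 0 := by
    intro i
    fin_cases i
    · show (lam ^ 2 + (a ^ 2 + b ^ 2 + c ^ 2)) * X₁ 0 = 0
      linear_combination -(lam * E10 + Complex.I * b * E22 - Complex.I * c * E21 -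
        a * h₁ + (b * (a * X₁ 1 - b * X₁ 0) - c * (c * X₁ 0 - a * X₁ 2)) * hI)
    · show (lam ^ 2 + (a ^ 2 + b ^ 2 + c ^ 2)) * X₁ 1 = 0
      linear_combination -(lam * E11 + Complex.I * c * E20 - Complex.I * a * E22 -
        b * h₁ + (c * (b * X₁ 2 - c * X₁ 1) - a * (a * X₁ 1 - b * X₁ 0)) * hI)
    · show (lam ^ 2 + (a ^ 2 + b ^ 2 + c ^ 2)) * X₁ 2 = 0
      linear_combination -(lam * E12 + Complex.I * a * E21 - Complex.I * b * E20 -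
        c * h₁ + (a * (c * X₁ 0 - a * X₁ 2) - b * (b * X₁ 2 - c * X₁ 1)) * hI)
  have k2 : ∀ i, (lam ^ 2 + (a ^ 2 + b ^ 2 + c ^ 2)) * X₂ i = 0 := by
    intro i
    fin_cases i
    · show (lam ^ 2 + (a ^ 2 + b ^ 2 + c ^ 2)) * X₂ 0 = 0
      linear_combination -(lam * E20 - Complex.I * b * E12 + Complex.I * c * E11 -
        a * h₂ + (b * (a * X₂ 1 - b * X₂ 0) - c * (c * X₂ 0 - a * X₂ 2)) * hI)
    · show (lam ^ 2 + (a ^ 2 + b ^ 2 + c ^ 2)) * X₂ 1 = 0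
      linear_combination -(lam * E21 - Complex.I * c * E10 + Complex.I * a * E12 -
        b * h₂ + (c * (b * X₂ 2 - c * X₂ 1) - a * (a * X₂ 1 - b * X₂ 0)) * hI)
    · show (lam ^ 2 + (a ^ 2 + b ^ 2 + c ^ 2)) * X₂ 2 = 0
      linear_combination -(lam * E22 - Complex.I * a * E11 + Complex.I * b * E10 -
        c * h₂ + (a * (c * X₂ 0 - a * X₂ 2) - b * (b * X₂ 2 - c * X₂ 1)) * hI)
  -- some component is nonzero
  have hlam2 : lam ^ 2 + (a ^ 2 + b ^ 2 + c ^ 2) = 0 := by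
    by_contra h
    apply hX
    have hz1 : X₁ = 0 := funext fun i => by
      have := k1 i; exact (mul_eq_zero.1 this).resolve_left h
    have hz2 : X₂ = 0 := funext fun i => by
      have := k2 i; exact (mul_eq_zero.1 this).resolve_left h
    simp [hz1, hz2, Prod.ext_iff]
  -- now conclude
  set s : ℝ := Real.sqrt (ξ ⬝ᵥ ξ)
  have hdot : ξ ⬝ᵥ ξ = ξ 0 ^ 2 + ξ 1 ^ 2 + ξ 2 ^ 2 := by
    rw [dotProduct, Fin.sum_univ_three]; ring
  have hs : (s : ℝ) ^ 2 = ξ 0 ^ 2 + ξ 1 ^ 2 + ξ 2 ^ 2 := by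
    rw [← hdot]
    exact Real.sq_sqrt (by rw [hdot]; positivity)
  have hsc : (s : ℂ) ^ 2 = a ^ 2 + b ^ 2 + c ^ 2 := by
    have := congrArg (Complex.ofReal) hs
    push_cast at this
    simpa [a, b, c] using this
  have hfactor : (lam - Complex.I * s) * (lam + Complex.I * s) = 0 := by
    have h' : lam ^ 2 + ((s : ℂ)) ^ 2 = 0 := by rw [hsc]; exact hlam2
    linear_combination h' - (s : ℂ) ^ 2 * hI
  rcases mul_eq_zero.1 hfactor with h | h
  · exact Or.inl (sub_eq_zero.1 h)
  · exact Or.inr (add_eq_zero_iff_eq_neg.1 h)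
end

section
/- Let X and Y be Banach spaces and let K₁ : X → X, K₂ : Y → X, K₃ : X → Y, K₄ : Y → Y be bounded linear operators with ‖K₁‖ < 1, ‖K₄‖ < 1, and ‖K₂‖·‖K₃‖ < (1 − ‖K₁‖)(1 − ‖K₄‖). Then the block operator I + K on X × Y, where K(x,y) = (K₁x + K₂y, K₃x + K₄y), is invertible. -/
open ContinuousLinearMap

/-- If `‖K₁‖ < 1`, `‖K₄‖ < 1` and `‖K₂‖·‖K₃‖ < (1 − ‖K₁‖)(1 − ‖K₄‖)`, then the block
operator `I + K` on `X × Y`, where `K(x,y) = (K₁x + K₂y, K₃x + K₄y)`, is invertible. -/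
theorem stmt4 {X Y : Type*} [NormedAddCommGroup X] [NormedSpace ℝ X] [CompleteSpace X]
    [NormedAddCommGroup Y] [NormedSpace ℝ Y] [CompleteSpace Y]
    (K₁ : X →L[ℝ] X) (K₂ : Y →L[ℝ] X) (K₃ : X →L[ℝ] Y) (K₄ : Y →L[ℝ] Y)
    (h₁ : ‖K₁‖ < 1) (h₄ : ‖K₄‖ < 1)
    (h : ‖K₂‖ * ‖K₃‖ < (1 - ‖K₁‖) * (1 - ‖K₄‖)) :
    IsUnit ((1 : (X × Y) →L[ℝ] (X × Y)) +
      ((K₁.comp (ContinuousLinearMap.fst ℝ X Y) +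
          K₂.comp (ContinuousLinearMap.snd ℝ X Y)).prod
        (K₃.comp (ContinuousLinearMap.fst ℝ X Y) +
          K₄.comp (ContinuousLinearMap.snd ℝ X Y)))) := by
  have h₁' : (0:ℝ) < 1 - ‖K₁‖ := by linarith
  have h₄' : (0:ℝ) < 1 - ‖K₄‖ := by linarith
  have hK1 : ‖-K₁‖ < 1 := by rwa [norm_neg]
  set A : (X →L[ℝ] X)ˣ := Units.oneSub (-K₁) hK1 with hA
  set Ai : X →L[ℝ] X := ↑A⁻¹ with hAi
  have hAval : (A : X →L[ℝ] X) = 1 + K₁ := by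
    simp [hA, Units.val_oneSub, sub_neg_eq_add]
  have hAiA : ∀ x, Ai ((A : X →L[ℝ] X) x) = x := fun x => by
    rw [hAi, ← mul_apply_eq_comp, A.inv_mul, one_apply_eq_self]
  have hAAi : ∀ x, (A : X →L[ℝ] X) (Ai x) = x := fun x => by
    rw [hAi, ← mul_apply_eq_comp, A.mul_inv, one_apply_eq_self]
  have hAinorm : ‖Ai‖ ≤ (1 - ‖K₁‖)⁻¹ := by
    have h1 : ‖(1 : X →L[ℝ] X)‖ ≤ 1 := norm_id_le
    have ht := tsum_geometric_le_of_norm_lt_one (-K₁) hK1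
    rw [norm_neg] at ht
    have : Ai = ∑' n : ℕ, (-K₁) ^ n := rfl
    rw [this]
    linarith
  set T : Y →L[ℝ] Y := (K₃.comp (Ai.comp K₂)) - K₄ with hT
  have hTnorm : ‖T‖ < 1 := by
    have h2 : ‖K₂‖ * ‖K₃‖ * (1 - ‖K₁‖)⁻¹ < 1 - ‖K₄‖ := by
      rw [← div_eq_mul_inv, div_lt_iff₀ h₁']
      nlinarith [h]
    have h3 : ‖K₃.comp (Ai.comp K₂)‖ ≤ ‖K₃‖ * (‖Ai‖ * ‖K₂‖) :=
      le_trans (opNorm_comp_le _ _) (by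
        gcongr; exact opNorm_comp_le _ _)
    have h5 : ‖K₃‖ * (‖Ai‖ * ‖K₂‖) ≤ ‖K₂‖ * ‖K₃‖ * (1 - ‖K₁‖)⁻¹ := by
      nlinarith [norm_nonneg K₂, norm_nonneg K₃, norm_nonneg Ai, hAinorm,
        mul_le_mul_of_nonneg_left (mul_le_mul_of_nonneg_right hAinorm (norm_nonneg K₂))
          (norm_nonneg K₃)]
    calc ‖T‖ ≤ ‖K₃.comp (Ai.comp K₂)‖ + ‖K₄‖ := norm_sub_le _ _
      _ < 1 := by linarith
  set SU : (Y →L[ℝ] Y)ˣ := Units.oneSub T hTnorm with hSU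
  set S : Y →L[ℝ] Y := ↑SU with hSv
  set Si : Y →L[ℝ] Y := ↑SU⁻¹ with hSi
  have hSval : S = 1 + K₄ - K₃.comp (Ai.comp K₂) := by
    rw [hSv, hSU, Units.val_oneSub, hT]; abel
  have hSSi : ∀ y, S (Si y) = y := fun y => by
    rw [hSv, hSi, ← mul_apply_eq_comp, SU.mul_inv, one_apply_eq_self]
  have hSiS : ∀ y, Si (S y) = y := fun y => by
    rw [hSv, hSi, ← mul_apply_eq_comp, SU.inv_mul, one_apply_eq_self]
  -- the three factors
  set Nu : (X × Y) →L[ℝ] (X × Y) :=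
    ((Ai.comp K₂).comp (ContinuousLinearMap.snd ℝ X Y)).prod 0 with hNu
  set Nl : (X × Y) →L[ℝ] (X × Y) :=
    (0 : (X × Y) →L[ℝ] X).prod ((K₃.comp Ai).comp (ContinuousLinearMap.fst ℝ X Y)) with hNl
  have hNu2 : Nu * Nu = 0 := ContinuousLinearMap.ext fun ⟨x, y⟩ => by
    simp [hNu, mul_apply]
  have hNl2 : Nl * Nl = 0 := ContinuousLinearMap.ext fun ⟨x, y⟩ => by
    simp [hNl, mul_apply]
  have hUu : IsUnit ((1 : (X × Y) →L[ℝ] (X × Y)) + Nu) :=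
    IsNilpotent.isUnit_one_add ⟨2, by rw [sq, hNu2]⟩
  have hUl : IsUnit ((1 : (X × Y) →L[ℝ] (X × Y)) + Nl) :=
    IsNilpotent.isUnit_one_add ⟨2, by rw [sq, hNl2]⟩
  have hUd : IsUnit (((A : X →L[ℝ] X)).prodMap S) := by
    refine isUnit_iff_exists.mpr ⟨Ai.prodMap Si, ?_, ?_⟩
    · exact ContinuousLinearMap.ext fun ⟨x, y⟩ => by simp [mul_apply, hAAi, hSSi]
    · exact ContinuousLinearMap.ext fun ⟨x, y⟩ => by simp [mul_apply, hAiA, hSiS]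
  have hAapp : ∀ x, (A : X →L[ℝ] X) x = x + K₁ x := fun x => by
    rw [hAval]; simp [add_apply, one_apply]
  have hSapp : ∀ y, S y = y + K₄ y - K₃ (Ai (K₂ y)) := fun y => by
    rw [hSval]; simp [add_apply, one_apply, sub_apply, comp_apply]
  have key : ((1 : (X × Y) →L[ℝ] (X × Y)) +
      ((K₁.comp (ContinuousLinearMap.fst ℝ X Y) +
          K₂.comp (ContinuousLinearMap.snd ℝ X Y)).prod
        (K₃.comp (ContinuousLinearMap.fst ℝ X Y) +
          K₄.comp (ContinuousLinearMap.snd ℝ X Y)))) =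
      ((1 : (X × Y) →L[ℝ] (X × Y)) + Nl) * (((A : X →L[ℝ] X)).prodMap S) *
        ((1 : (X × Y) →L[ℝ] (X × Y)) + Nu) := ContinuousLinearMap.ext fun ⟨x, y⟩ => by
    simp only [mul_apply_eq_comp, add_apply, one_apply_eq_self, prod_apply, coe_comp', coe_fst', coe_snd',
      Function.comp_apply, coe_prodMap', Prod.map_apply, Prod.fst_add, Prod.snd_add, hNu, hNl,
      zero_apply, Prod.mk_add_mk, add_zero, zero_add, map_add, hAAi, hAiA]
    simp only [hAapp, hSapp, Prod.mk.injEq]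
    constructor <;> abel
  rw [key]
  exact (hUl.mul hUd).mul hUu
end

section
/- There exists a constant C > 0 such that for all x ≥ 0, all y ∈ ℝ, and all ξ ∈ ℝ³ with |ξ| ≥ 1, one has ∫_{ℝ³} |v|² e^{−|v|²/2} / ((x + ν₀)² + (y + v·ξ)²) dv ≤ C (x + ν₀)⁻¹ |ξ|⁻¹, where ν₀ > 0 is a fixed constant. -/
open MeasureTheory Real

private lemma base_int {a : ℝ} (ha : 0 < a) :
    Integrable fun u : ℝ => (a ^ 2 + u ^ 2)⁻¹ := by
  have h2 : Integrable fun u : ℝ => (a ^ 2)⁻¹ * (1 + (u / a) ^ 2)⁻¹ :=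
    (integrable_inv_one_add_sq.comp_div ha.ne').const_mul _
  refine h2.congr (Filter.Eventually.of_forall fun u => ?_)
  show (a ^ 2)⁻¹ * (1 + (u / a) ^ 2)⁻¹ = (a ^ 2 + u ^ 2)⁻¹
  have h3 : a ^ 2 + u ^ 2 = a ^ 2 * (1 + (u / a) ^ 2) := by field_simp
  rw [h3, mul_inv]

private lemma lorentz_int {a : ℝ} (ha : 0 < a) (y : ℝ) {s : ℝ} (hs : 0 < s) :
    Integrable fun t : ℝ => (a ^ 2 + (y + s * t) ^ 2)⁻¹ := by
  have h1 : Integrable fun u : ℝ => (a ^ 2 + (y + u) ^ 2)⁻¹ := by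
    have := ((measurePreserving_add_left (volume : Measure ℝ) y).integrable_comp_emb
      (MeasurableEquiv.addLeft y).measurableEmbedding
      (g := fun u : ℝ => (a ^ 2 + u ^ 2)⁻¹)).2 (base_int ha)
    exact this
  exact h1.comp_mul_left' hs.ne'

private lemma lorentz_val {a : ℝ} (ha : 0 < a) (y : ℝ) {s : ℝ} (hs : 0 < s) :
    ∫ t : ℝ, (a ^ 2 + (y + s * t) ^ 2)⁻¹ = π / (a * s) := by
  have base : ∫ u : ℝ, (a ^ 2 + u ^ 2)⁻¹ = π / a := by
    have h3 : ∀ u : ℝ, (a ^ 2 + u ^ 2)⁻¹ = (a ^ 2)⁻¹ * (1 + (u / a) ^ 2)⁻¹ := by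
      intro u
      have : a ^ 2 + u ^ 2 = a ^ 2 * (1 + (u / a) ^ 2) := by field_simp
      rw [this, mul_inv]
    simp_rw [h3]
    rw [integral_const_mul, Measure.integral_comp_div (fun u : ℝ => (1 + u ^ 2)⁻¹) a,
      integral_univ_inv_one_add_sq, abs_of_pos ha, smul_eq_mul]
    field_simp
  calc ∫ t : ℝ, (a ^ 2 + (y + s * t) ^ 2)⁻¹
      = |s⁻¹| • ∫ u : ℝ, (a ^ 2 + (y + u) ^ 2)⁻¹ :=
        Measure.integral_comp_mul_left (fun u : ℝ => (a ^ 2 + (y + u) ^ 2)⁻¹) s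
    _ = s⁻¹ * (π / a) := by
        rw [integral_add_left_eq_self (fun u : ℝ => (a ^ 2 + u ^ 2)⁻¹) y, base,
          abs_of_pos (inv_pos.2 hs), smul_eq_mul]
    _ = π / (a * s) := by rw [mul_comm, ← div_eq_mul_inv, div_div]

private lemma gauss_int : Integrable fun t : ℝ => exp (-t ^ 2 / 4) := by
  refine (integrable_exp_neg_mul_sq (by norm_num : (0:ℝ) < 4⁻¹)).congr
    (Filter.Eventually.of_forall fun t => ?_)
  ring_nf

private lemma gauss_val : ∫ t : ℝ, exp (-t ^ 2 / 4) = Real.sqrt (4 * π) := by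
  have : ∀ t : ℝ, exp (-t ^ 2 / 4) = exp (-(4⁻¹ : ℝ) * t ^ 2) := fun t => by ring_nf
  simp_rw [this]
  rw [integral_gaussian]
  norm_num [mul_comm]
  ring

set_option maxHeartbeats 1000000 in
/-- Gaussian-weighted resolvent integral estimate: for fixed `ν₀ > 0` there is `C > 0` such that
for all `x ≥ 0`, `y ∈ ℝ` and `|ξ| ≥ 1`,
`∫ |v|² e^{−|v|²/2} / ((x+ν₀)² + (y + v·ξ)²) dv ≤ C (x+ν₀)⁻¹ |ξ|⁻¹`. -/
theorem stmt5 (ν₀ : ℝ) (hν₀ : 0 < ν₀) :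
    ∃ C > (0 : ℝ), ∀ x : ℝ, 0 ≤ x → ∀ y : ℝ, ∀ ξ : EuclideanSpace ℝ (Fin 3), 1 ≤ ‖ξ‖ →
      (∫ v : EuclideanSpace ℝ (Fin 3),
          ‖v‖ ^ 2 * Real.exp (-‖v‖ ^ 2 / 2) / ((x + ν₀) ^ 2 + (y + (inner ℝ v ξ : ℝ)) ^ 2))
        ≤ C * (x + ν₀)⁻¹ * ‖ξ‖⁻¹ := by
  refine ⟨16 * π ^ 2, by positivity, ?_⟩
  intro x hx y ξ hξ
  set a : ℝ := x + ν₀ with ha_def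
  have ha : 0 < a := by positivity
  have hs : (0:ℝ) < ‖ξ‖ := lt_of_lt_of_le one_pos hξ
  set s : ℝ := ‖ξ‖ with hs_def
  set e : EuclideanSpace ℝ (Fin 3) := (s⁻¹ : ℝ) • ξ with he_def
  have he : ‖e‖ = 1 := by
    rw [he_def, norm_smul, norm_inv, Real.norm_eq_abs, abs_of_pos hs, ← hs_def,
      inv_mul_cancel₀ hs.ne']
  -- orthonormal basis with b 0 = e
  have horth : Orthonormal ℝ (({0} : Set (Fin 3)).restrict (fun _ : Fin 3 => e)) := by
    constructor
    · intro i; exact he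
    · intro i j hij
      exact absurd (Subtype.ext ((Set.eq_of_mem_singleton i.2).trans
        (Set.eq_of_mem_singleton j.2).symm)) hij
  obtain ⟨b, hb⟩ := horth.exists_orthonormalBasis_extension_of_card_eq (by simp) 
  have hb0 : b 0 = e := hb 0 rfl
  -- change of variables
  set f : EuclideanSpace ℝ (Fin 3) → ℝ := fun v =>
    ‖v‖ ^ 2 * Real.exp (-‖v‖ ^ 2 / 2) / (a ^ 2 + (y + (inner ℝ v ξ : ℝ)) ^ 2) with hf_def
  have step1 : ∫ v : EuclideanSpace ℝ (Fin 3), f v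
      = ∫ z : EuclideanSpace ℝ (Fin 3), f (b.repr.symm z) :=
    (b.measurePreserving_repr_symm.integral_comp
      b.repr.symm.toHomeomorph.measurableEmbedding f).symm
  have step2 : ∫ z : EuclideanSpace ℝ (Fin 3), f (b.repr.symm z)
      = ∫ w : Fin 3 → ℝ, f (b.repr.symm ((MeasurableEquiv.toLp 2 (Fin 3 → ℝ)) w)) :=
    ((MeasurePreserving.symm _ (EuclideanSpace.volume_preserving_symm_measurableEquiv_toLp (Fin 3))).integral_comp
      (MeasurableEquiv.toLp 2 (Fin 3 → ℝ)).measurableEmbedding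
      (fun z => f (b.repr.symm z))).symm
  -- identify the integrand in coordinates
  have hnorm : ∀ w : Fin 3 → ℝ,
      ‖b.repr.symm ((MeasurableEquiv.toLp 2 (Fin 3 → ℝ)) w)‖ ^ 2 = ∑ i, w i ^ 2 := by
    intro w
    rw [LinearIsometryEquiv.norm_map, EuclideanSpace.norm_eq]
    rw [Real.sq_sqrt (by positivity)]
    congr 1
    ext i
    simp [MeasurableEquiv.toLp_apply, Real.norm_eq_abs, sq_abs]
  have hinner : ∀ w : Fin 3 → ℝ,
      (inner ℝ (b.repr.symm ((MeasurableEquiv.toLp 2 (Fin 3 → ℝ)) w)) ξ : ℝ)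
        = s * w 0 := by
    intro w
    have hxi : ξ = s • e := by
      rw [he_def, smul_smul, mul_inv_cancel₀ hs.ne', one_smul]
    rw [hxi, real_inner_smul_right, ← hb0]
    congr 1
    rw [← b.repr.inner_map_map, b.repr_self 0, LinearIsometryEquiv.apply_symm_apply,
      EuclideanSpace.inner_single_right]
    simp [MeasurableEquiv.toLp_apply]
  set G : (Fin 3 → ℝ) → ℝ := fun w =>
    (∑ i, w i ^ 2) * Real.exp (-(∑ i, w i ^ 2) / 2) / (a ^ 2 + (y + s * w 0) ^ 2) with hG_def
  have step3 : ∫ w : Fin 3 → ℝ,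
      f (b.repr.symm ((MeasurableEquiv.toLp 2 (Fin 3 → ℝ)) w)) = ∫ w, G w := by
    congr 1
    funext w
    simp only [hf_def, hG_def, hnorm w, hinner w, neg_div]
  set F : Fin 3 → ℝ → ℝ := fun i t =>
    exp (-t ^ 2 / 4) * (if i = 0 then (a ^ 2 + (y + s * t) ^ 2)⁻¹ else 1) with hF_def
  have hF0 : Integrable (F 0) := by
    simp only [hF_def, if_pos]
    exact (lorentz_int ha y hs).bdd_mul
      (Continuous.aestronglyMeasurable (by continuity))
      (c := 1) (Filter.Eventually.of_forall fun t => by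
        rw [Real.norm_eq_abs, abs_of_pos (exp_pos _)]
        exact exp_le_one_iff.2 (by nlinarith [sq_nonneg t]))
  have hFi : ∀ i : Fin 3, Integrable (F i) := by
    intro i
    by_cases hi : i = 0
    · subst hi; exact hF0
    · simp only [hF_def, if_neg hi, mul_one]
      exact gauss_int
  have hprod_int : Integrable fun w : Fin 3 → ℝ => ∏ i, F i (w i) :=
    Integrable.fintype_prod hFi
  -- pointwise bound  G w ≤ 4 * ∏ i, F i (w i)
  have hpoint : ∀ w : Fin 3 → ℝ, G w ≤ 4 * ∏ i, F i (w i) := by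
    intro w
    have hq : (0:ℝ) ≤ ∑ i, w i ^ 2 := by positivity
    set q : ℝ := ∑ i, w i ^ 2 with hq_def
    have hd : (0:ℝ) < a ^ 2 + (y + s * w 0) ^ 2 := by positivity
    have hprod : ∏ i, F i (w i)
        = exp (-q / 4) * (a ^ 2 + (y + s * w 0) ^ 2)⁻¹ := by
      rw [Fin.prod_univ_three]
      simp only [hF_def, if_pos, if_neg (by decide : (1 : Fin 3) ≠ 0),
        if_neg (by decide : (2 : Fin 3) ≠ 0), mul_one]
      rw [hq_def, Fin.sum_univ_three,
        show (-(w 0 ^ 2 + w 1 ^ 2 + w 2 ^ 2) / 4 : ℝ)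
          = -w 0 ^ 2 / 4 + (-w 1 ^ 2 / 4 + -w 2 ^ 2 / 4) by ring,
        Real.exp_add, Real.exp_add]
      ring
    simp only [hG_def]
    rw [hprod]
    have key : q * exp (-q / 2) ≤ 4 * exp (-q / 4) := by
      have h1 : q ≤ 4 * exp (q / 4) := by
        have := Real.add_one_le_exp (q / 4)
        nlinarith [Real.exp_pos (q / 4)]
      calc q * exp (-q / 2) ≤ 4 * exp (q / 4) * exp (-q / 2) :=
            mul_le_mul_of_nonneg_right h1 (exp_pos _).le
        _ = 4 * exp (-q / 4) := by rw [mul_assoc, ← Real.exp_add]; ring_nf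
    calc q * exp (-q / 2) / (a ^ 2 + (y + s * w 0) ^ 2)
        = q * exp (-q / 2) * (a ^ 2 + (y + s * w 0) ^ 2)⁻¹ := by rw [div_eq_mul_inv]
      _ ≤ 4 * exp (-q / 4) * (a ^ 2 + (y + s * w 0) ^ 2)⁻¹ :=
          mul_le_mul_of_nonneg_right key (by positivity)
      _ = 4 * (exp (-q / 4) * (a ^ 2 + (y + s * w 0) ^ 2)⁻¹) := by ring
  -- bound the integral
  have hGnonneg : ∀ w : Fin 3 → ℝ, 0 ≤ G w := by
    intro w; rw [hG_def]; positivity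
  have step4 : ∫ w, G w ≤ ∫ w : Fin 3 → ℝ, 4 * ∏ i, F i (w i) :=
    integral_mono_of_nonneg (Filter.Eventually.of_forall hGnonneg)
      (hprod_int.const_mul 4) (Filter.Eventually.of_forall hpoint)
  have step5 : ∫ w : Fin 3 → ℝ, 4 * ∏ i, F i (w i)
      = 4 * ((∫ t, F 0 t) * (∫ t, F 1 t) * (∫ t, F 2 t)) := by
    rw [integral_const_mul, integral_fintype_prod_volume_eq_prod, Fin.prod_univ_three]
  have hval12 : ∀ i : Fin 3, i ≠ 0 → ∫ t, F i t = Real.sqrt (4 * π) := by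
    intro i hi
    simp only [hF_def, if_neg hi, mul_one]
    exact gauss_val
  have hF0nonneg : (0:ℝ) ≤ ∫ t, F 0 t :=
    integral_nonneg fun t => by rw [hF_def]; positivity
  have hF0le : ∫ t, F 0 t ≤ π / (a * s) := by
    rw [← lorentz_val ha y hs]
    refine integral_mono_of_nonneg (Filter.Eventually.of_forall fun t => by rw [hF_def]; positivity)
      (lorentz_int ha y hs) (Filter.Eventually.of_forall fun t => ?_)
    simp only [hF_def, if_pos]
    calc exp (-t ^ 2 / 4) * (a ^ 2 + (y + s * t) ^ 2)⁻¹
        ≤ 1 * (a ^ 2 + (y + s * t) ^ 2)⁻¹ :=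
          mul_le_mul_of_nonneg_right (exp_le_one_iff.2 (by nlinarith [sq_nonneg t]))
            (by positivity)
      _ = (a ^ 2 + (y + s * t) ^ 2)⁻¹ := one_mul _
  have final : 4 * ((∫ t, F 0 t) * (∫ t, F 1 t) * (∫ t, F 2 t)) ≤ 16 * π ^ 2 * a⁻¹ * s⁻¹ := by
    rw [hval12 1 (by decide), hval12 2 (by decide)]
    have hsq : Real.sqrt (4 * π) * Real.sqrt (4 * π) = 4 * π :=
      Real.mul_self_sqrt (by positivity)
    calc 4 * ((∫ t, F 0 t) * Real.sqrt (4 * π) * Real.sqrt (4 * π))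
        = 4 * (4 * π) * (∫ t, F 0 t) := by rw [mul_assoc ((∫ t, F 0 t))]; rw [hsq]; ring
      _ ≤ 4 * (4 * π) * (π / (a * s)) :=
          mul_le_mul_of_nonneg_left hF0le (by positivity)
      _ = 16 * π ^ 2 * a⁻¹ * s⁻¹ := by field_simp; ring
  calc (∫ v : EuclideanSpace ℝ (Fin 3), f v) = ∫ w, G w := by rw [step1, step2, step3]
    _ ≤ 4 * ((∫ t, F 0 t) * (∫ t, F 1 t) * (∫ t, F 2 t)) := le_trans step4 (le_of_eq step5)
    _ ≤ 16 * π ^ 2 * a⁻¹ * s⁻¹ := final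
end

section
/- There exists a constant C₃ > 0 and ν₁ > 0 such that for all s ≥ 1, ∫_{ℝ³} v₂² e^{−|v|²/2}/(2π)^{3/2} / (ν₁²(1 + |v|²) + (v₁ + 1)² s²) dv ≥ C₃ / s. -/
open MeasureTheory Real

lemma gauss_int_s6 : Integrable (fun v : EuclideanSpace ℝ (Fin 3) => Real.exp (-(1/4) * ‖v‖^2)) := by
  have h := (GaussianFourier.integrable_cexp_neg_mul_sq_norm_add (V := EuclideanSpace ℝ (Fin 3))
    (b := (1/4 : ℂ)) (by norm_num) 0 0).norm
  refine h.congr ?_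
  filter_upwards with v
  rw [Complex.norm_exp]
  norm_num
  norm_cast

lemma norm_sq_eq (v : EuclideanSpace ℝ (Fin 3)) :
    ‖v‖ ^ 2 = (v 0)^2 + (v 1)^2 + (v 2)^2 := by
  rw [EuclideanSpace.norm_eq, Real.sq_sqrt (by positivity)]
  simp [Fin.sum_univ_three, sq_abs]

lemma integ (s : ℝ) : Integrable (fun v : EuclideanSpace ℝ (Fin 3) =>
    (v 1) ^ 2 * (Real.exp (-‖v‖ ^ 2 / 2) / (2 * Real.pi) ^ ((3 : ℝ) / 2)) /
      ((1:ℝ) ^ 2 * (1 + ‖v‖ ^ 2) + (v 0 + 1) ^ 2 * s ^ 2)) := by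
  have hD : ∀ v : EuclideanSpace ℝ (Fin 3),
      (1:ℝ) ≤ (1:ℝ) ^ 2 * (1 + ‖v‖ ^ 2) + (v 0 + 1) ^ 2 * s ^ 2 := by
    intro v; nlinarith [sq_nonneg ‖v‖, sq_nonneg ((v 0 + 1) * s), mul_pow (v 0 + 1) s 2]
  have hcont : Continuous (fun v : EuclideanSpace ℝ (Fin 3) =>
      (v 1) ^ 2 * (Real.exp (-‖v‖ ^ 2 / 2) / (2 * Real.pi) ^ ((3 : ℝ) / 2)) /
        ((1:ℝ) ^ 2 * (1 + ‖v‖ ^ 2) + (v 0 + 1) ^ 2 * s ^ 2)) := by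
    apply Continuous.div
    · fun_prop
    · fun_prop
    · intro v; have := hD v; positivity
  refine (gauss_int_s6.const_mul (4 / (2 * Real.pi) ^ ((3:ℝ)/2))).mono'
    hcont.aestronglyMeasurable ?_
  filter_upwards with v
  have hD' := hD v
  have h1 : (v 1) ^ 2 ≤ ‖v‖ ^ 2 := by nlinarith [norm_sq_eq v, sq_nonneg (v 0), sq_nonneg (v 2)]
  have h2 : ‖v‖ ^ 2 ≤ 4 * Real.exp (‖v‖^2 / 4) := by
    have := Real.add_one_le_exp (‖v‖^2/4); nlinarith [Real.exp_pos (‖v‖^2/4)]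
  have hpi : (0:ℝ) < (2 * Real.pi) ^ ((3:ℝ)/2) := by positivity
  have hnn : (0:ℝ) ≤ (v 1) ^ 2 * (Real.exp (-‖v‖ ^ 2 / 2) / (2 * Real.pi) ^ ((3 : ℝ) / 2)) /
        ((1:ℝ) ^ 2 * (1 + ‖v‖ ^ 2) + (v 0 + 1) ^ 2 * s ^ 2) := by positivity
  rw [Real.norm_of_nonneg hnn]
  calc (v 1) ^ 2 * (Real.exp (-‖v‖ ^ 2 / 2) / (2 * Real.pi) ^ ((3 : ℝ) / 2)) /
        ((1:ℝ) ^ 2 * (1 + ‖v‖ ^ 2) + (v 0 + 1) ^ 2 * s ^ 2)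
      ≤ (v 1) ^ 2 * (Real.exp (-‖v‖ ^ 2 / 2) / (2 * Real.pi) ^ ((3 : ℝ) / 2)) :=
        div_le_self (by positivity) hD'
    _ ≤ (4 * Real.exp (‖v‖^2/4)) * (Real.exp (-‖v‖ ^ 2 / 2) / (2 * Real.pi) ^ ((3 : ℝ) / 2)) :=
        mul_le_mul_of_nonneg_right (h1.trans h2) (by positivity)
    _ = 4 / (2 * Real.pi) ^ ((3:ℝ)/2) * (Real.exp (‖v‖^2/4) * Real.exp (-‖v‖ ^ 2 / 2)) := by
        ring
    _ = 4 / (2 * Real.pi) ^ ((3:ℝ)/2) * Real.exp (-(1/4) * ‖v‖^2) := by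
        rw [← Real.exp_add]; congr 1; ring

set_option maxHeartbeats 1000000 in
/-- Lower bound for the Maxwellian-weighted integral appearing in the high-frequency spectral
analysis: there are `ν₁ > 0` and `C₃ > 0` such that for all `s ≥ 1`,
`∫ v₂² M(v) / (ν₁²(1+|v|²) + (v₁+1)²s²) dv ≥ C₃ / s`. -/
theorem stmt6 : ∃ ν₁ > (0 : ℝ), ∃ C₃ > (0 : ℝ), ∀ s : ℝ, 1 ≤ s →
    C₃ / s ≤ ∫ v : EuclideanSpace ℝ (Fin 3),
      (v 1) ^ 2 * (Real.exp (-‖v‖ ^ 2 / 2) / (2 * Real.pi) ^ ((3 : ℝ) / 2)) /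
        (ν₁ ^ 2 * (1 + ‖v‖ ^ 2) + (v 0 + 1) ^ 2 * s ^ 2) := by
  have hpi : (0:ℝ) < (2 * Real.pi) ^ ((3:ℝ)/2) := by positivity
  set c : ℝ := Real.exp (-(9:ℝ)/2) / (2 * Real.pi) ^ ((3:ℝ)/2) / 11 with hc
  have hcpos : 0 < c := by positivity
  refine ⟨1, one_pos, 2 * c, by positivity, fun s hs => ?_⟩
  have hs0 : (0:ℝ) < s := lt_of_lt_of_le one_pos hs
  have hinv : 1/s ≤ 1 := by rw [div_le_one hs0]; exact hs
  have hinv0 : 0 < 1/s := by positivity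
  set I : Fin 3 → Set ℝ := ![Set.Icc (-1-1/s) (-1+1/s), Set.Icc 1 2, Set.Icc 0 1] with hI
  set A : Set (EuclideanSpace ℝ (Fin 3)) :=
    ((MeasurableEquiv.toLp 2 (Fin 3 → ℝ)).symm) ⁻¹' (Set.univ.pi I) with hA
  have hImeas : ∀ i, MeasurableSet (I i) := by
    intro i; fin_cases i <;> exact measurableSet_Icc
  have hpimeas : MeasurableSet (Set.univ.pi I) := MeasurableSet.univ_pi hImeas
  have hAmeas : MeasurableSet A :=
    ((MeasurableEquiv.toLp 2 (Fin 3 → ℝ)).symm).measurable hpimeas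
  have hvol : volume A = ENNReal.ofReal (2/s) := by
    rw [hA, (EuclideanSpace.volume_preserving_symm_measurableEquiv_toLp (Fin 3)).measure_preimage
      hpimeas.nullMeasurableSet, volume_pi_pi]
    rw [Fin.prod_univ_three]
    simp only [hI, Matrix.cons_val_zero, Matrix.cons_val_one, Matrix.head_cons,
      Matrix.cons_val_two, Matrix.tail_cons, Real.volume_Icc]
    have e1 : (-1+1/s) - (-1-1/s) = 2/s := by ring
    rw [e1]
    norm_num
  have hvolR : (volume A).toReal = 2/s := by
    rw [hvol, ENNReal.toReal_ofReal (by positivity)]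
  -- pointwise lower bound on A
  have hlow : ∀ v ∈ A, c ≤ (v 1) ^ 2 * (Real.exp (-‖v‖ ^ 2 / 2) / (2 * Real.pi) ^ ((3 : ℝ) / 2)) /
      ((1:ℝ) ^ 2 * (1 + ‖v‖ ^ 2) + (v 0 + 1) ^ 2 * s ^ 2) := by
    intro v hv
    rw [hA, Set.mem_preimage, Set.mem_univ_pi] at hv
    have h0 := hv 0
    have h1 := hv 1
    have h2 := hv 2
    simp only [hI, Matrix.cons_val_zero, Matrix.cons_val_one, Matrix.head_cons,
      Matrix.cons_val_two, Matrix.tail_cons, Set.mem_Icc] at h0 h1 h2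
    have hv0 : ((MeasurableEquiv.toLp 2 (Fin 3 → ℝ)).symm) v 0 = v 0 := rfl
    have hv1 : ((MeasurableEquiv.toLp 2 (Fin 3 → ℝ)).symm) v 1 = v 1 := rfl
    have hv2 : ((MeasurableEquiv.toLp 2 (Fin 3 → ℝ)).symm) v 2 = v 2 := rfl
    rw [hv0] at h0; rw [hv1] at h1; rw [hv2] at h2
    have hn : ‖v‖ ^ 2 ≤ 9 := by
      rw [norm_sq_eq]
      nlinarith [h0.1, h0.2, h1.1, h1.2, h2.1, h2.2]
    have hsq : (v 0 + 1) ^ 2 * s ^ 2 ≤ 1 := by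
      have ha : (v 0 + 1) ^ 2 ≤ (1/s) ^ 2 := sq_le_sq' (by linarith [h0.1]) (by linarith [h0.2])
      have : (v 0 + 1) ^ 2 * s ^ 2 ≤ (1/s) ^ 2 * s ^ 2 :=
        mul_le_mul_of_nonneg_right ha (by positivity)
      have he : (1/s) ^ 2 * s ^ 2 = 1 := by field_simp
      linarith [he ▸ this]
    have hDle : (1:ℝ) ^ 2 * (1 + ‖v‖ ^ 2) + (v 0 + 1) ^ 2 * s ^ 2 ≤ 11 := by nlinarith
    have hDpos : (0:ℝ) < (1:ℝ) ^ 2 * (1 + ‖v‖ ^ 2) + (v 0 + 1) ^ 2 * s ^ 2 := by positivity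
    have hNum : Real.exp (-(9:ℝ)/2) / (2 * Real.pi) ^ ((3:ℝ)/2)
        ≤ (v 1) ^ 2 * (Real.exp (-‖v‖ ^ 2 / 2) / (2 * Real.pi) ^ ((3 : ℝ) / 2)) := by
      have hexp : Real.exp (-(9:ℝ)/2) ≤ Real.exp (-‖v‖ ^ 2 / 2) :=
        Real.exp_le_exp.mpr (by linarith)
      have h1sq : (1:ℝ) ≤ (v 1) ^ 2 := by nlinarith [h1.1, h1.2]
      calc Real.exp (-(9:ℝ)/2) / (2 * Real.pi) ^ ((3:ℝ)/2)
          ≤ Real.exp (-‖v‖ ^ 2 / 2) / (2 * Real.pi) ^ ((3:ℝ)/2) :=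
            by gcongr
        _ ≤ (v 1) ^ 2 * (Real.exp (-‖v‖ ^ 2 / 2) / (2 * Real.pi) ^ ((3 : ℝ) / 2)) := by
            nlinarith [div_nonneg (Real.exp_nonneg (-‖v‖ ^ 2 / 2)) hpi.le]
    rw [hc]
    exact div_le_div₀ (by positivity) hNum hDpos hDle
  have hint := integ s
  calc 2 * c / s = c * (2 / s) := by ring
    _ = c * (volume A).toReal := by rw [hvolR]
    _ ≤ ∫ v in A, (v 1) ^ 2 * (Real.exp (-‖v‖ ^ 2 / 2) / (2 * Real.pi) ^ ((3 : ℝ) / 2)) /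
          ((1:ℝ) ^ 2 * (1 + ‖v‖ ^ 2) + (v 0 + 1) ^ 2 * s ^ 2) :=
        setIntegral_ge_of_const_le_real hAmeas (by rw [hvol]; exact ENNReal.ofReal_ne_top)
          hlow hint.integrableOn
    _ ≤ ∫ v : EuclideanSpace ℝ (Fin 3),
          (v 1) ^ 2 * (Real.exp (-‖v‖ ^ 2 / 2) / (2 * Real.pi) ^ ((3 : ℝ) / 2)) /
          ((1:ℝ) ^ 2 * (1 + ‖v‖ ^ 2) + (v 0 + 1) ^ 2 * s ^ 2) := by
        apply setIntegral_le_integral hint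
        filter_upwards with v
        have : (0:ℝ) < (1:ℝ) ^ 2 * (1 + ‖v‖ ^ 2) + (v 0 + 1) ^ 2 * s ^ 2 := by positivity
        positivity
end

section
/- There exists a constant C₄ > 0 such that for all s ≥ 1 and constants ν₀, ν₁ > 0, ∫_{ℝ³} ν₀²(1 + |v|²) v₂² e^{−|v|²/2} / (ν₁² + (v₁ + 1)² s²) dv ≤ C₄ / s. -/
open MeasureTheory

private lemma polyExpLeTwo (x : ℝ) : (1 + x ^ 2) * Real.exp (-x ^ 2 / 2) ≤ 2 := by
  have h := Real.add_one_le_exp (x ^ 2 / 2)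
  have hE : 0 < Real.exp (x ^ 2 / 2) := Real.exp_pos _
  have hx : Real.exp (-x ^ 2 / 2) = (Real.exp (x ^ 2 / 2))⁻¹ := by
    rw [← Real.exp_neg]; congr 1; ring
  rw [hx]
  have h2 : (1 + x ^ 2) ≤ 2 * Real.exp (x ^ 2 / 2) := by nlinarith
  calc (1 + x ^ 2) * (Real.exp (x ^ 2 / 2))⁻¹
      ≤ (2 * Real.exp (x ^ 2 / 2)) * (Real.exp (x ^ 2 / 2))⁻¹ :=
        mul_le_mul_of_nonneg_right h2 (inv_nonneg.2 hE.le)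
    _ = 2 := by field_simp

private lemma intPowGauss (n : ℕ) :
    Integrable fun x : ℝ => x ^ n * Real.exp (-x ^ 2 / 2) := by
  have h := integrable_rpow_mul_exp_neg_mul_sq (b := (1 : ℝ) / 2) (by norm_num)
    (s := (n : ℝ)) (lt_of_lt_of_le (by norm_num) (Nat.cast_nonneg n))
  have heq : (fun x : ℝ => x ^ n * Real.exp (-x ^ 2 / 2))
      = fun x : ℝ => x ^ (n : ℝ) * Real.exp (-(1 / 2) * x ^ 2) := by
    funext x
    rw [Real.rpow_natCast]
    congr 1
    ring
  rw [heq]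
  exact h

private lemma cauchyIntegral (ν₁ s : ℝ) (hν₁ : 0 < ν₁) (hs : 1 ≤ s) :
    ∫ x : ℝ, (ν₁ ^ 2 + (x + 1) ^ 2 * s ^ 2)⁻¹ = Real.pi / (ν₁ * s) := by
  have hs0 : (0 : ℝ) < s := lt_of_lt_of_le one_pos hs
  rw [integral_add_right_eq_self (fun x : ℝ => (ν₁ ^ 2 + x ^ 2 * s ^ 2)⁻¹) 1]
  have h1 : ∀ x : ℝ, (ν₁ ^ 2 + x ^ 2 * s ^ 2)⁻¹
      = ν₁⁻¹ ^ 2 * (1 + (s / ν₁ * x) ^ 2)⁻¹ := by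
    intro x
    have hd1 : (0:ℝ) < ν₁ ^ 2 + x ^ 2 * s ^ 2 := by positivity
    have hd2 : (0:ℝ) < 1 + (s / ν₁ * x) ^ 2 := by positivity
    rw [inv_pow, ← mul_inv, eq_comm, inv_eq_iff_eq_inv, inv_inv]
    field_simp
  simp_rw [h1]
  rw [MeasureTheory.integral_const_mul,
    MeasureTheory.Measure.integral_comp_mul_left (fun t : ℝ => (1 + t ^ 2)⁻¹) (s / ν₁),
    integral_univ_inv_one_add_sq]
  rw [smul_eq_mul, abs_of_nonneg (by positivity : (0:ℝ) ≤ (s / ν₁)⁻¹)]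
  field_simp

private lemma cauchyIntegrable (ν₁ s : ℝ) (hν₁ : 0 < ν₁) (hs : 1 ≤ s) :
    Integrable fun x : ℝ => (ν₁ ^ 2 + (x + 1) ^ 2 * s ^ 2)⁻¹ := by
  have hs0 : (0 : ℝ) < s := lt_of_lt_of_le one_pos hs
  have hD : ∀ x : ℝ, 0 < ν₁ ^ 2 + (x + 1) ^ 2 * s ^ 2 := fun x => by positivity
  have hg : Integrable fun x : ℝ => (min (ν₁ ^ 2) 1)⁻¹ * (1 + (x + 1) ^ 2)⁻¹ :=
    ((integrable_inv_one_add_sq).comp_add_right 1).const_mul _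
  refine hg.mono' ?_ ?_
  · refine Continuous.aestronglyMeasurable ?_
    exact (continuous_const.add (((continuous_id.add continuous_const).pow 2).mul
      continuous_const)).inv₀ (fun x => (hD x).ne')
  · filter_upwards with x
    rw [Real.norm_eq_abs, abs_of_nonneg (inv_nonneg.2 (hD x).le), ← mul_inv]
    refine inv_anti₀ (by positivity) ?_
    have hmin : 0 < min (ν₁ ^ 2) 1 := lt_min (by positivity) one_pos
    have h1 : min (ν₁ ^ 2) 1 * 1 ≤ ν₁ ^ 2 := by
      rw [mul_one]; exact min_le_left _ _
    have h2 : min (ν₁ ^ 2) 1 * (x + 1) ^ 2 ≤ (x + 1) ^ 2 * s ^ 2 := by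
      calc min (ν₁ ^ 2) 1 * (x + 1) ^ 2 ≤ 1 * (x + 1) ^ 2 :=
            mul_le_mul_of_nonneg_right (min_le_right _ _) (sq_nonneg _)
        _ = (x + 1) ^ 2 * 1 := by ring
        _ ≤ (x + 1) ^ 2 * s ^ 2 := by
            refine mul_le_mul_of_nonneg_left ?_ (sq_nonneg _)
            nlinarith
    calc min (ν₁ ^ 2) 1 * (1 + (x + 1) ^ 2)
        = min (ν₁ ^ 2) 1 * 1 + min (ν₁ ^ 2) 1 * (x + 1) ^ 2 := by ring
      _ ≤ ν₁ ^ 2 + (x + 1) ^ 2 * s ^ 2 := add_le_add h1 h2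

/-- Upper bound: for fixed `ν₀, ν₁ > 0` there is `C₄ > 0` such that for all `s ≥ 1`,
`∫ ν₀²(1+|v|²) v₂² e^{−|v|²/2} / (ν₁+(v₁+1)²s²) dv ≤ C₄ / s`. -/
theorem stmt7 (ν₀ ν₁ : ℝ) (hν₀ : 0 < ν₀) (hν₁ : 0 < ν₁) :
    ∃ C₄ > (0 : ℝ), ∀ s : ℝ, 1 ≤ s →
      (∫ v : EuclideanSpace ℝ (Fin 3),
          ν₀ ^ 2 * (1 + ‖v‖ ^ 2) * (v 1) ^ 2 * Real.exp (-‖v‖ ^ 2 / 2) /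
            (ν₁ ^ 2 + (v 0 + 1) ^ 2 * s ^ 2))
        ≤ C₄ / s := by
  set I₁ : ℝ := ∫ x : ℝ, (1 + x ^ 2) * x ^ 2 * Real.exp (-x ^ 2 / 2) with hI₁def
  set I₂ : ℝ := ∫ x : ℝ, (1 + x ^ 2) * Real.exp (-x ^ 2 / 2) with hI₂def
  have hI₁int : Integrable fun x : ℝ => (1 + x ^ 2) * x ^ 2 * Real.exp (-x ^ 2 / 2) := by
    refine ((intPowGauss 2).add (intPowGauss 4)).congr ?_
    filter_upwards with x
    simp only [Pi.add_apply]
    ring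
  have hI₂int : Integrable fun x : ℝ => (1 + x ^ 2) * Real.exp (-x ^ 2 / 2) := by
    refine ((intPowGauss 0).add (intPowGauss 2)).congr ?_
    filter_upwards with x
    simp only [Pi.add_apply]
    ring
  have hI₁0 : 0 ≤ I₁ := integral_nonneg fun x => by positivity
  have hI₂0 : 0 ≤ I₂ := integral_nonneg fun x => by positivity
  refine ⟨max 1 (2 * Real.pi * ν₀ ^ 2 / ν₁ * I₁ * I₂),
    lt_of_lt_of_le one_pos (le_max_left _ _), ?_⟩
  intro s hs
  have hs0 : (0 : ℝ) < s := lt_of_lt_of_le one_pos hs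
  have hD : ∀ x : ℝ, 0 < ν₁ ^ 2 + (x + 1) ^ 2 * s ^ 2 := fun x => by positivity
  -- the three 1D factor functions
  set G : Fin 3 → ℝ → ℝ :=
    ![fun x => ν₀ ^ 2 * (1 + x ^ 2) * Real.exp (-x ^ 2 / 2) / (ν₁ ^ 2 + (x + 1) ^ 2 * s ^ 2),
      fun x => (1 + x ^ 2) * x ^ 2 * Real.exp (-x ^ 2 / 2),
      fun x => (1 + x ^ 2) * Real.exp (-x ^ 2 / 2)] with hGdef
  -- transfer to the product space
  have hnorm : ∀ v : EuclideanSpace ℝ (Fin 3),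
      ‖v‖ ^ 2 = (v 0) ^ 2 + (v 1) ^ 2 + (v 2) ^ 2 := by
    intro v
    rw [EuclideanSpace.norm_eq, Real.sq_sqrt (by positivity)]
    simp [Fin.sum_univ_three, Real.norm_eq_abs, sq_abs]
  have htransfer :
      (∫ v : EuclideanSpace ℝ (Fin 3),
          ν₀ ^ 2 * (1 + ‖v‖ ^ 2) * (v 1) ^ 2 * Real.exp (-‖v‖ ^ 2 / 2) /
            (ν₁ ^ 2 + (v 0 + 1) ^ 2 * s ^ 2))
        = ∫ y : Fin 3 → ℝ,
          ν₀ ^ 2 * (1 + ((y 0) ^ 2 + (y 1) ^ 2 + (y 2) ^ 2)) * (y 1) ^ 2 *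
            Real.exp (-((y 0) ^ 2 + (y 1) ^ 2 + (y 2) ^ 2) / 2) /
            (ν₁ ^ 2 + (y 0 + 1) ^ 2 * s ^ 2) := by
    rw [← ((EuclideanSpace.volume_preserving_symm_measurableEquiv_toLp (ι := Fin 3)).symm).integral_comp'
      (fun v : EuclideanSpace ℝ (Fin 3) =>
        ν₀ ^ 2 * (1 + ‖v‖ ^ 2) * (v 1) ^ 2 * Real.exp (-‖v‖ ^ 2 / 2) /
          (ν₁ ^ 2 + (v 0 + 1) ^ 2 * s ^ 2))]
    refine integral_congr_ae (Filter.Eventually.of_forall fun y => ?_)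
    simp only [hnorm]
    rfl
  rw [htransfer]
  -- pointwise bound by a product function
  have hGpos : ∀ i x, 0 ≤ G i x := by
    intro i x
    fin_cases i <;> simp [hGdef] <;> positivity
  have hpoint : ∀ y : Fin 3 → ℝ,
      ν₀ ^ 2 * (1 + ((y 0) ^ 2 + (y 1) ^ 2 + (y 2) ^ 2)) * (y 1) ^ 2 *
          Real.exp (-((y 0) ^ 2 + (y 1) ^ 2 + (y 2) ^ 2) / 2) /
          (ν₁ ^ 2 + (y 0 + 1) ^ 2 * s ^ 2)
        ≤ ∏ i, G i (y i) := by
    intro y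
    set a := y 0
    set b := y 1
    set c := y 2
    have hexp : Real.exp (-(a ^ 2 + b ^ 2 + c ^ 2) / 2)
        = Real.exp (-a ^ 2 / 2) * Real.exp (-b ^ 2 / 2) * Real.exp (-c ^ 2 / 2) := by
      rw [← Real.exp_add, ← Real.exp_add]
      congr 1
      ring
    have hkey : 1 + (a ^ 2 + b ^ 2 + c ^ 2)
        ≤ (1 + a ^ 2) * (1 + b ^ 2) * (1 + c ^ 2) := by
      nlinarith [mul_nonneg (sq_nonneg a) (sq_nonneg b), mul_nonneg (sq_nonneg a) (sq_nonneg c),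
        mul_nonneg (sq_nonneg b) (sq_nonneg c),
        mul_nonneg (mul_nonneg (sq_nonneg a) (sq_nonneg b)) (sq_nonneg c)]
    rw [Fin.prod_univ_three]
    simp only [hGdef, Matrix.cons_val_zero, Matrix.cons_val_one, Matrix.head_cons,
      Matrix.cons_val_two, Matrix.tail_cons]
    rw [hexp]
    have hDa := hD a
    calc ν₀ ^ 2 * (1 + (a ^ 2 + b ^ 2 + c ^ 2)) * b ^ 2 *
            (Real.exp (-a ^ 2 / 2) * Real.exp (-b ^ 2 / 2) * Real.exp (-c ^ 2 / 2)) /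
            (ν₁ ^ 2 + (a + 1) ^ 2 * s ^ 2)
        ≤ ν₀ ^ 2 * ((1 + a ^ 2) * (1 + b ^ 2) * (1 + c ^ 2)) * b ^ 2 *
            (Real.exp (-a ^ 2 / 2) * Real.exp (-b ^ 2 / 2) * Real.exp (-c ^ 2 / 2)) /
            (ν₁ ^ 2 + (a + 1) ^ 2 * s ^ 2) := by
          gcongr
      _ = ν₀ ^ 2 * (1 + a ^ 2) * Real.exp (-a ^ 2 / 2) / (ν₁ ^ 2 + (a + 1) ^ 2 * s ^ 2) *
            ((1 + b ^ 2) * b ^ 2 * Real.exp (-b ^ 2 / 2)) *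
            ((1 + c ^ 2) * Real.exp (-c ^ 2 / 2)) := by
          field_simp
  -- integrability of the three factors
  have hG0int : Integrable (G 0) := by
    have h : Integrable fun x : ℝ =>
        (2 * ν₀ ^ 2) * (ν₁ ^ 2 + (x + 1) ^ 2 * s ^ 2)⁻¹ :=
      (cauchyIntegrable ν₁ s hν₁ hs).const_mul _
    refine h.mono' ?_ ?_
    · simp only [hGdef, Matrix.cons_val_zero]
      refine Continuous.aestronglyMeasurable (Continuous.div (by fun_prop) (by fun_prop)
        (fun x => (hD x).ne'))
    · filter_upwards with x
      simp only [hGdef, Matrix.cons_val_zero]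
      rw [Real.norm_eq_abs, abs_of_nonneg (by positivity)]
      rw [div_eq_mul_inv]
      refine mul_le_mul_of_nonneg_right ?_ (inv_nonneg.2 (hD x).le)
      calc ν₀ ^ 2 * (1 + x ^ 2) * Real.exp (-x ^ 2 / 2)
          = ν₀ ^ 2 * ((1 + x ^ 2) * Real.exp (-x ^ 2 / 2)) := by ring
        _ ≤ ν₀ ^ 2 * 2 := mul_le_mul_of_nonneg_left (polyExpLeTwo x) (by positivity)
        _ = 2 * ν₀ ^ 2 := by ring
  have hGint : ∀ i, Integrable (G i) := by
    intro i
    fin_cases i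
    · exact hG0int
    · exact hI₁int
    · exact hI₂int
  -- monotonicity of the integral
  have hmono :
      (∫ y : Fin 3 → ℝ,
          ν₀ ^ 2 * (1 + ((y 0) ^ 2 + (y 1) ^ 2 + (y 2) ^ 2)) * (y 1) ^ 2 *
            Real.exp (-((y 0) ^ 2 + (y 1) ^ 2 + (y 2) ^ 2) / 2) /
            (ν₁ ^ 2 + (y 0 + 1) ^ 2 * s ^ 2))
        ≤ ∫ y : Fin 3 → ℝ, ∏ i, G i (y i) := by
    refine integral_mono_of_nonneg ?_ (Integrable.fintype_prod hGint) ?_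
    · filter_upwards with y
      have := hD (y 0)
      positivity
    · filter_upwards with y
      exact hpoint y
  -- compute the product integral
  rw [MeasureTheory.integral_fintype_prod_volume_eq_prod (ι := Fin 3) G, Fin.prod_univ_three] at hmono
  -- bound the first factor integral
  have hG0bound : ∫ x, G 0 x ≤ 2 * ν₀ ^ 2 * (Real.pi / (ν₁ * s)) := by
    have h1 : ∫ x, G 0 x ≤ ∫ x : ℝ, (2 * ν₀ ^ 2) * (ν₁ ^ 2 + (x + 1) ^ 2 * s ^ 2)⁻¹ := by
      refine integral_mono_of_nonneg ?_ ((cauchyIntegrable ν₁ s hν₁ hs).const_mul _) ?_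
      · filter_upwards with x
        exact hGpos 0 x
      · filter_upwards with x
        simp only [hGdef, Matrix.cons_val_zero]
        rw [div_eq_mul_inv]
        refine mul_le_mul_of_nonneg_right ?_ (inv_nonneg.2 (hD x).le)
        calc ν₀ ^ 2 * (1 + x ^ 2) * Real.exp (-x ^ 2 / 2)
            = ν₀ ^ 2 * ((1 + x ^ 2) * Real.exp (-x ^ 2 / 2)) := by ring
          _ ≤ ν₀ ^ 2 * 2 := mul_le_mul_of_nonneg_left (polyExpLeTwo x) (by positivity)
          _ = 2 * ν₀ ^ 2 := by ring
    rw [MeasureTheory.integral_const_mul, cauchyIntegral ν₁ s hν₁ hs] at h1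
    exact h1
  have hG1 : ∫ x, G 1 x = I₁ := by simp [hGdef, hI₁def]
  have hG2 : ∫ x, G 2 x = I₂ := by simp [hGdef, hI₂def]
  rw [hG1, hG2] at hmono
  have hfinal : (∫ x, G 0 x) * I₁ * I₂ ≤ (max 1 (2 * Real.pi * ν₀ ^ 2 / ν₁ * I₁ * I₂)) / s := by
    calc (∫ x, G 0 x) * I₁ * I₂
        ≤ (2 * ν₀ ^ 2 * (Real.pi / (ν₁ * s))) * I₁ * I₂ := by
          refine mul_le_mul_of_nonneg_right (mul_le_mul_of_nonneg_right hG0bound hI₁0) hI₂0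
      _ = (2 * Real.pi * ν₀ ^ 2 / ν₁ * I₁ * I₂) / s := by
          simp only [div_eq_mul_inv, mul_inv]
          ring
      _ ≤ (max 1 (2 * Real.pi * ν₀ ^ 2 / ν₁ * I₁ * I₂)) / s := by
          exact (div_le_div_iff_of_pos_right hs0).mpr (le_max_right _ _)
  exact le_trans hmono hfinal
end

section
/- Let L ≥ √(4π/b₁) for some b₁ > 0, and let η > 0. Then there exists C₃ > 0 such that for all t ≥ L²: ∫₀^L r² e^{−2ηr²} cos²(t + b₁ r²) dr ≥ C₃. Consequently, for d₀ > 0, d₀²/4 · ∫_{|ξ| ≤ r₀} e^{−2η|ξ|² t} cos²(t + b₁|ξ|² t) dξ ≥ C (1+t)^{−3/2} for all t large enough (depending on r₀, η, b₁, d₀). -/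
open MeasureTheory Set

-- Part 1 aux: positivity, continuity, periodicity of F
private lemma aux_part1 (b₁ η L : ℝ) (hb₁ : 0 < b₁) (hη : 0 < η) (hL0 : 0 < L) :
    ∃ C₃ > (0:ℝ), ∀ t : ℝ, C₃ ≤ ∫ r in (0:ℝ)..L,
      r ^ 2 * Real.exp (-2 * η * r ^ 2) * (Real.cos (t + b₁ * r ^ 2)) ^ 2 := by
  set g : ℝ → ℝ → ℝ := fun t r =>
    r ^ 2 * Real.exp (-2 * η * r ^ 2) * (Real.cos (t + b₁ * r ^ 2)) ^ 2 with hg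
  set F : ℝ → ℝ := fun t => ∫ r in (0:ℝ)..L, g t r with hF
  have hgc : Continuous (Function.uncurry g) := by
    simp only [hg, Function.uncurry]; fun_prop
  have contF : Continuous F :=
    intervalIntegral.continuous_parametric_intervalIntegral_of_continuous' hgc 0 L
  have perF : Function.Periodic F Real.pi := by
    intro t
    simp only [hF]
    congr 1
    ext r
    have h' : t + Real.pi + b₁ * r ^ 2 = (t + b₁ * r ^ 2) + Real.pi := by ring
    simp only [hg]
    rw [h', Real.cos_add, Real.cos_pi, Real.sin_pi]
    ring
  have posF : ∀ t, 0 < F t := by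
    intro t
    -- find a point where cos ≠ 0
    have key : ∃ r ∈ Ioo (0:ℝ) L, Real.cos (t + b₁ * r ^ 2) ≠ 0 := by
      by_contra h
      push_neg at h
      set δ : ℝ := min (Real.pi / (2 * b₁)) (L ^ 2 / 8) with hδ
      have hδpos : 0 < δ := by
        apply lt_min
        · positivity
        · positivity
      set r₁ : ℝ := L / 2 with hr₁
      set r₂ : ℝ := Real.sqrt (r₁ ^ 2 + δ) with hr₂
      have hr₂sq : r₂ ^ 2 = r₁ ^ 2 + δ := Real.sq_sqrt (by positivity)
      have hr₁mem : r₁ ∈ Ioo (0:ℝ) L := ⟨by positivity, by linarith⟩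
      have hr₂mem : r₂ ∈ Ioo (0:ℝ) L := by
        constructor
        · exact Real.sqrt_pos.mpr (by positivity)
        · have h1 : r₁ ^ 2 + δ < L ^ 2 := by
            have : δ ≤ L ^ 2 / 8 := min_le_right _ _
            have : r₁ ^ 2 = L ^ 2 / 4 := by rw [hr₁]; ring
            nlinarith
          nlinarith [Real.sq_sqrt (show (0:ℝ) ≤ r₁ ^ 2 + δ by positivity),
            Real.sqrt_nonneg (r₁ ^ 2 + δ)]
      have h1 := h r₁ hr₁mem
      have h2 := h r₂ hr₂mem
      rw [Real.cos_eq_zero_iff] at h1 h2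
      obtain ⟨k, hk⟩ := h1
      obtain ⟨m, hm⟩ := h2
      have hdiff : b₁ * r₂ ^ 2 - b₁ * r₁ ^ 2 = (m - k) * Real.pi := by
        have : (t + b₁ * r₂ ^ 2) - (t + b₁ * r₁ ^ 2) = (m - k) * Real.pi := by
          rw [hm, hk]; push_cast; ring
        linarith [this]
      have hgap : b₁ * r₂ ^ 2 - b₁ * r₁ ^ 2 = b₁ * δ := by rw [hr₂sq]; ring
      have hδub : b₁ * δ < Real.pi := by
        have : δ ≤ Real.pi / (2 * b₁) := min_le_left _ _
        calc b₁ * δ ≤ b₁ * (Real.pi / (2 * b₁)) := by nlinarith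
          _ = Real.pi / 2 := by field_simp
          _ < Real.pi := by linarith [Real.pi_pos]
      have hδlb : 0 < b₁ * δ := by positivity
      rw [hgap] at hdiff
      have hmk : (0:ℝ) < ((m:ℝ) - (k:ℝ)) * Real.pi := by rw [← hdiff]; exact hδlb
      have hmk' : ((m:ℝ) - (k:ℝ)) * Real.pi < Real.pi := by rw [← hdiff]; exact hδub
      have h01 : (0:ℝ) < ((m:ℝ) - (k:ℝ)) := by
        by_contra hc
        push_neg at hc
        nlinarith [Real.pi_pos]
      have h02 : ((m:ℝ) - (k:ℝ)) < 1 := by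
        by_contra hc
        push_neg at hc
        nlinarith [Real.pi_pos]
      have e1 : (0:ℤ) < m - k := by exact_mod_cast (by push_cast; linarith : (0:ℝ) < ((m-k:ℤ):ℝ))
      have e2 : (m - k : ℤ) < 1 := by exact_mod_cast (by push_cast; linarith : ((m-k:ℤ):ℝ) < 1)
      omega
    obtain ⟨rbar, hrbarmem, hrbar⟩ := key
    have hcont : Continuous (g t) := hgc.comp (continuous_const.prodMk continuous_id)
    have hnonneg : ∀ r, 0 ≤ g t r := fun r => by positivity
    rw [hF]
    rw [intervalIntegral.integral_pos_iff_support_of_nonneg_ae'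
      (Filter.Eventually.of_forall fun r => hnonneg r)
      (hcont.intervalIntegrable 0 L)]
    refine ⟨hL0, ?_⟩
    set U : Set ℝ := Ioo 0 L ∩ (fun r => Real.cos (t + b₁ * r ^ 2)) ⁻¹' {0}ᶜ with hU
    have hUopen : IsOpen U :=
      isOpen_Ioo.inter ((isOpen_compl_singleton).preimage (by fun_prop))
    have hUne : U.Nonempty := ⟨rbar, hrbarmem, hrbar⟩
    have hUsub : U ⊆ Function.support (g t) ∩ Ioc 0 L := by
      rintro r ⟨hrm, hrc⟩
      refine ⟨?_, hrm.1, hrm.2.le⟩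
      simp only [Function.mem_support, hg]
      have h1 : r ≠ 0 := ne_of_gt hrm.1
      have h2 : Real.cos (t + b₁ * r ^ 2) ≠ 0 := hrc
      positivity
    calc (0:ENNReal) < volume U := hUopen.measure_pos volume hUne
      _ ≤ volume (Function.support (g t) ∩ Ioc 0 L) := measure_mono hUsub
  obtain ⟨tm, htm, hmin⟩ := isCompact_Icc.exists_isMinOn (α := ℝ)
    (Set.nonempty_Icc.mpr Real.pi_pos.le) contF.continuousOn
  refine ⟨F tm, posF tm, fun t => ?_⟩
  obtain ⟨y, hy, hFy⟩ := perF.exists_mem_Ico₀ Real.pi_pos t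
  show F tm ≤ F t
  rw [hFy]
  exact hmin ⟨hy.1, hy.2.le⟩


private lemma aux_part2 (b₁ η L : ℝ) (hb₁ : 0 < b₁) (hη : 0 < η) (hL0 : 0 < L)
    (C₃ : ℝ) (hC₃ : 0 < C₃)
    (hC₃le : ∀ t : ℝ, L ^ 2 ≤ t → C₃ ≤ ∫ r in (0:ℝ)..L,
      r ^ 2 * Real.exp (-2 * η * r ^ 2) * (Real.cos (t + b₁ * r ^ 2)) ^ 2) :
    ∀ r₀ > (0 : ℝ), ∀ d₀ > (0 : ℝ), ∃ C > (0 : ℝ), ∃ t₀ : ℝ, ∀ t : ℝ, t₀ ≤ t →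
      C * (1 + t) ^ (-(3 : ℝ) / 2) ≤
        d₀ ^ 2 / 4 *
          ∫ ξ in Metric.closedBall (0 : EuclideanSpace ℝ (Fin 3)) r₀,
            Real.exp (-2 * η * ‖ξ‖ ^ 2 * t) * (Real.cos (t + b₁ * ‖ξ‖ ^ 2 * t)) ^ 2 := by
  intro r₀ hr₀ d₀ hd₀
  set c : ℝ := (volume (Metric.ball (0 : EuclideanSpace ℝ (Fin 3)) 1)).toReal with hcdef
  have hc : 0 < c :=
    ENNReal.toReal_pos (Metric.measure_ball_pos volume _ one_pos).ne' measure_ball_lt_top.ne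
  refine ⟨d₀ ^ 2 / 4 * (3 * c * C₃), by positivity,
    max 1 (max (L ^ 2) ((L / r₀) ^ 2)), fun t ht => ?_⟩
  have ht1 : (1:ℝ) ≤ t := le_trans (le_max_left _ _) ht
  have ht0 : (0:ℝ) < t := by linarith
  have htL2 : L ^ 2 ≤ t := le_trans (le_trans (le_max_left _ _) (le_max_right _ _)) ht
  have htr : (L / r₀) ^ 2 ≤ t := le_trans (le_trans (le_max_right _ _) (le_max_right _ _)) ht
  set s : ℝ := Real.sqrt t with hsdef
  have hs : 0 < s := Real.sqrt_pos.mpr ht0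
  have hs2 : s ^ 2 = t := Real.sq_sqrt ht0.le
  have hLrs : L ≤ r₀ * s := by
    have h1 : L / r₀ ≤ s := by
      rw [hsdef]
      calc L / r₀ = Real.sqrt ((L / r₀) ^ 2) := (Real.sqrt_sq (by positivity)).symm
        _ ≤ Real.sqrt t := Real.sqrt_le_sqrt htr
    calc L = r₀ * (L / r₀) := by field_simp
      _ ≤ r₀ * s := by nlinarith
  set G : ℝ → ℝ := fun r => r ^ 2 * Real.exp (-2 * η * r ^ 2) * (Real.cos (t + b₁ * r ^ 2)) ^ 2
    with hGdef
  have hGc : Continuous G := by simp only [hGdef]; fun_prop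
  have hGnn : ∀ r, 0 ≤ G r := fun r => by simp only [hGdef]; positivity
  set f : ℝ → ℝ := fun y => if y ≤ r₀ then
      Real.exp (-2 * η * y ^ 2 * t) * (Real.cos (t + b₁ * y ^ 2 * t)) ^ 2 else 0 with hfdef
  -- polar coordinates
  have key : (∫ ξ in Metric.closedBall (0 : EuclideanSpace ℝ (Fin 3)) r₀,
        Real.exp (-2 * η * ‖ξ‖ ^ 2 * t) * (Real.cos (t + b₁ * ‖ξ‖ ^ 2 * t)) ^ 2)
      = 3 * c * ∫ y in (0:ℝ)..r₀,
          y ^ 2 * (Real.exp (-2 * η * y ^ 2 * t) * (Real.cos (t + b₁ * y ^ 2 * t)) ^ 2) := by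
    have e1 : (∫ ξ in Metric.closedBall (0 : EuclideanSpace ℝ (Fin 3)) r₀,
          Real.exp (-2 * η * ‖ξ‖ ^ 2 * t) * (Real.cos (t + b₁ * ‖ξ‖ ^ 2 * t)) ^ 2)
        = ∫ ξ : EuclideanSpace ℝ (Fin 3), f ‖ξ‖ := by
      rw [← integral_indicator (measurableSet_closedBall)]
      congr 1
      ext ξ
      classical
      rw [Set.indicator_apply]
      simp only [Metric.mem_closedBall, dist_zero_right, hfdef]
    have e2 := integral_fun_norm_addHaar (volume : Measure (EuclideanSpace ℝ (Fin 3))) f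
    rw [finrank_euclideanSpace_fin] at e2
    rw [e1, e2]
    have e3 : (∫ y in Ioi (0:ℝ), y ^ (3 - 1) • f y)
        = ∫ y in (0:ℝ)..r₀,
          y ^ 2 * (Real.exp (-2 * η * y ^ 2 * t) * (Real.cos (t + b₁ * y ^ 2 * t)) ^ 2) := by
      have e4 : ∀ y ∈ Ioi (0:ℝ), y ^ (3 - 1) • f y
          = indicator (Ioc 0 r₀)
            (fun y => y ^ 2 * (Real.exp (-2 * η * y ^ 2 * t)
              * (Real.cos (t + b₁ * y ^ 2 * t)) ^ 2)) y := by
        intro y hy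
        simp only [hfdef, smul_eq_mul, indicator_apply, mem_Ioc]
        by_cases hyr : y ≤ r₀ <;> simp [hyr, mem_Ioi.mp hy]
      rw [setIntegral_congr_fun measurableSet_Ioi e4, setIntegral_indicator measurableSet_Ioc,
        inter_eq_self_of_subset_right Ioc_subset_Ioi_self,
        ← intervalIntegral.integral_of_le hr₀.le]
    rw [e3, nsmul_eq_mul, smul_eq_mul]
    push_cast
    rw [measureReal_def, ← hcdef]
    ring
  -- substitution y = r / sqrt t
  have sub : (∫ y in (0:ℝ)..r₀,
        y ^ 2 * (Real.exp (-2 * η * y ^ 2 * t) * (Real.cos (t + b₁ * y ^ 2 * t)) ^ 2))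
      = t⁻¹ * (s⁻¹ * ∫ r in (0:ℝ)..(r₀ * s), G r) := by
    have e1 : (∫ y in (0:ℝ)..r₀, G (y * s)) = s⁻¹ • ∫ r in (0:ℝ)..(r₀ * s), G r := by
      have := intervalIntegral.integral_comp_mul_right G (a := 0) (b := r₀) hs.ne'
      rwa [zero_mul] at this
    have e2 : ∀ y : ℝ, G (y * s)
        = t * (y ^ 2 * (Real.exp (-2 * η * y ^ 2 * t) * (Real.cos (t + b₁ * y ^ 2 * t)) ^ 2)) := by
      intro y
      have hys : (y * s) ^ 2 = y ^ 2 * t := by rw [mul_pow, hs2]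
      simp only [hGdef, hys]
      ring_nf
    have e5 : (∫ y in (0:ℝ)..r₀, G (y * s))
        = t * ∫ y in (0:ℝ)..r₀,
            y ^ 2 * (Real.exp (-2 * η * y ^ 2 * t) * (Real.cos (t + b₁ * y ^ 2 * t)) ^ 2) := by
      rw [← intervalIntegral.integral_const_mul]
      exact intervalIntegral.integral_congr (fun y _ => e2 y)
    rw [e1] at e5
    rw [smul_eq_mul] at e5
    rw [e5, inv_mul_cancel_left₀ ht0.ne']
  -- lower bound on the full integral
  have hK : C₃ ≤ ∫ r in (0:ℝ)..(r₀ * s), G r := by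
    have hsplit : (∫ r in (0:ℝ)..L, G r) + (∫ r in L..(r₀ * s), G r)
        = ∫ r in (0:ℝ)..(r₀ * s), G r :=
      intervalIntegral.integral_add_adjacent_intervals
        (hGc.intervalIntegrable 0 L) (hGc.intervalIntegrable L (r₀ * s))
    have h1 : C₃ ≤ ∫ r in (0:ℝ)..L, G r := hC₃le t htL2
    have h2 : 0 ≤ ∫ r in L..(r₀ * s), G r :=
      intervalIntegral.integral_nonneg hLrs (fun r _ => hGnn r)
    linarith
  -- rpow bound
  have hpow : (1 + t) ^ (-(3:ℝ) / 2) ≤ t⁻¹ * s⁻¹ := by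
    have h1 : t⁻¹ * s⁻¹ = t ^ (-(3:ℝ) / 2) := by
      rw [hsdef, Real.sqrt_eq_rpow, ← Real.rpow_neg ht0.le, ← Real.rpow_neg_one t,
        ← Real.rpow_add ht0]
      norm_num
    rw [h1]
    exact Real.rpow_le_rpow_of_nonpos ht0 (by linarith) (by norm_num)
  rw [key, sub]
  have hnn : (0:ℝ) ≤ ∫ r in (0:ℝ)..(r₀ * s), G r := le_trans hC₃.le hK
  calc d₀ ^ 2 / 4 * (3 * c * C₃) * (1 + t) ^ (-(3:ℝ) / 2)
      ≤ d₀ ^ 2 / 4 * (3 * c * C₃) * (t⁻¹ * s⁻¹) := by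
        apply mul_le_mul_of_nonneg_left hpow (by positivity)
    _ = d₀ ^ 2 / 4 * (3 * c * (t⁻¹ * (s⁻¹ * C₃))) := by ring
    _ ≤ d₀ ^ 2 / 4 * (3 * c * (t⁻¹ * (s⁻¹ * ∫ r in (0:ℝ)..(r₀ * s), G r))) := by
        have hti : (0:ℝ) ≤ t⁻¹ := by positivity
        have hsi : (0:ℝ) ≤ s⁻¹ := by positivity
        gcongr


/-- Oscillatory lower bounds: for `b₁, η > 0` and `L ≥ √(4π/b₁)` there is `C₃ > 0` with
`∫₀^L r² e^{−2ηr²} cos²(t+b₁r²) dr ≥ C₃` for all `t ≥ L²`; consequently, for `r₀, d₀ > 0`,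
`d₀²/4 · ∫_{|ξ|≤r₀} e^{−2η|ξ|²t} cos²(t+b₁|ξ|²t) dξ ≥ C (1+t)^{−3/2} for large `t`. -/
theorem stmt13 (b₁ η : ℝ) (hb₁ : 0 < b₁) (hη : 0 < η)
    (L : ℝ) (hL : Real.sqrt (4 * Real.pi / b₁) ≤ L) :
    (∃ C₃ > (0 : ℝ), ∀ t : ℝ, L ^ 2 ≤ t →
      C₃ ≤ ∫ r in (0 : ℝ)..L,
        r ^ 2 * Real.exp (-2 * η * r ^ 2) * (Real.cos (t + b₁ * r ^ 2)) ^ 2) ∧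
    (∀ r₀ > (0 : ℝ), ∀ d₀ > (0 : ℝ), ∃ C > (0 : ℝ), ∃ t₀ : ℝ, ∀ t : ℝ, t₀ ≤ t →
      C * (1 + t) ^ (-(3 : ℝ) / 2) ≤
        d₀ ^ 2 / 4 *
          ∫ ξ in Metric.closedBall (0 : EuclideanSpace ℝ (Fin 3)) r₀,
            Real.exp (-2 * η * ‖ξ‖ ^ 2 * t) * (Real.cos (t + b₁ * ‖ξ‖ ^ 2 * t)) ^ 2) := by
  have hL0 : 0 < L := lt_of_lt_of_le (Real.sqrt_pos.mpr (by positivity)) hL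
  obtain ⟨C₃, hC₃, hC₃le⟩ := aux_part1 b₁ η L hb₁ hη hL0
  exact ⟨⟨C₃, hC₃, fun t _ => hC₃le t⟩,
    aux_part2 b₁ η L hb₁ hη hL0 C₃ hC₃ (fun t _ => hC₃le t)⟩
end
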